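/- (The __Host- prefix strictly improves cookie integrity over the __Secure- prefix in the presence of related domains.) Let R ⊆ 𝒟 be a nonempty finite set with d ∈ R, and define L_pref = ⋁_{d' ∈ R} https(d') (the integrity component of a __Secure- prefix cookie for d) and L_host = https(d) (the integrity component of a __Host- prefix cookie for d). Then L_host ⊑_C L_pref; moreover, if there exists d' ∈ R with d' ≠ d, then ¬(L_pref ⊑_C L_host). Equivalently, by contravariance of ⊑_I, L_pref ⊑_I L_host always holds, and it is strict whenever d has a related domain distinct from itself. -/

import Mathlib

/-- Simple labels: generated by http(d), https(d), join (∨) and meet (∧). -/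
inductive SL (D : Type*) : Type _ where
  | http : D → SL D
  | https : D → SL D
  | join : SL D → SL D → SL D
  | meet : SL D → SL D → SL D

/-- The confidentiality pre-order ⊑_C: the smallest reflexive, transitive
relation closed under the four rules. -/
inductive Cleq {D : Type*} : SL D → SL D → Prop where
  | refl (l : SL D) : Cleq l l
  | trans {l₁ l₂ l₃ : SL D} : Cleq l₁ l₂ → Cleq l₂ l₃ → Cleq l₁ l₃
  | joinLeft (l₁ l₂ : SL D) : Cleq l₁ (SL.join l₁ l₂)
  | joinRight (l₁ l₂ : SL D) : Cleq l₂ (SL.join l₁ l₂)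
  | meetLeft (l₁ l₂ : SL D) : Cleq (SL.meet l₁ l₂) l₁
  | meetRight (l₁ l₂ : SL D) : Cleq (SL.meet l₁ l₂) l₂
  | joinLub {l₁ l₂ l₃ : SL D} : Cleq l₁ l₃ → Cleq l₂ l₃ → Cleq (SL.join l₁ l₂) l₃
  | meetGlb {l₁ l₂ l₃ : SL D} : Cleq l₁ l₂ → Cleq l₁ l₃ → Cleq l₁ (SL.meet l₂ l₃)

/-- The equivalence ≈ induced by the pre-order ⊑_C. -/
def Ceq {D : Type*} (l l' : SL D) : Prop := Cleq l l' ∧ Cleq l' l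

/-- The integrity pre-order ⊑_I, contra-variant to ⊑_C. -/
def Ileq {D : Type*} (l l' : SL D) : Prop := Cleq l' l

/-- Iterated join over a nonempty list of labels (head plus tail). -/
def joinList {D : Type*} : SL D → List (SL D) → SL D
  | a, [] => a
  | a, b :: bs => SL.join a (joinList b bs)

/-- Iterated meet over a nonempty list of labels (head plus tail). -/
def meetList {D : Type*} : SL D → List (SL D) → SL D
  | a, [] => a
  | a, b :: bs => SL.meet a (meetList b bs)

/-- Iterated join of `f` over the nonempty enumeration `d :: ds`. -/
def bigJoin {D : Type*} (f : D → SL D) (d : D) (ds : List D) : SL D :=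
  joinList (f d) (ds.map f)

/-- Iterated meet of `f` over the nonempty enumeration `d :: ds`. -/
def bigMeet {D : Type*} (f : D → SL D) (d : D) (ds : List D) : SL D :=
  meetList (f d) (ds.map f)

/-- Semantic evaluation: http atoms are false, https d is p d. -/
def ev {D : Type*} (p : D → Prop) : SL D → Prop
  | SL.http _ => False
  | SL.https x => p x
  | SL.join a b => ev p a ∨ ev p b
  | SL.meet a b => ev p a ∧ ev p b

lemma ev_mono {D : Type*} (p : D → Prop) {l l' : SL D} (h : Cleq l l') :
    ev p l → ev p l' := by
  induction h with
  | refl _ => exact id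
  | trans _ _ ih1 ih2 => exact fun h => ih2 (ih1 h)
  | joinLeft _ _ => exact Or.inl
  | joinRight _ _ => exact Or.inr
  | meetLeft _ _ => exact And.left
  | meetRight _ _ => exact And.right
  | joinLub _ _ ih1 ih2 => exact fun h => h.elim ih1 ih2
  | meetGlb _ _ ih1 ih2 => exact fun h => ⟨ih1 h, ih2 h⟩

lemma mem_le_joinList {D : Type*} (a : SL D) :
    ∀ (b : SL D) (bs : List (SL D)), (a = b ∨ a ∈ bs) → Cleq a (joinList b bs)
  | b, [], h => by
      rcases h with h | h
      · exact h ▸ Cleq.refl a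
      · cases h
  | b, c :: cs, h => by
      rcases h with h | h
      · exact h ▸ Cleq.joinLeft b (joinList c cs)
      · exact Cleq.trans (mem_le_joinList a c cs (by simpa using h))
          (Cleq.joinRight b (joinList c cs))

lemma ev_joinList {D : Type*} (p : D → Prop) :
    ∀ (b : SL D) (bs : List (SL D)), ev p (joinList b bs) → ev p b ∨ ∃ c ∈ bs, ev p c
  | b, [], h => Or.inl h
  | b, c :: cs, h => by
      rcases h with h | h
      · exact Or.inl h
      · rcases ev_joinList p c cs h with h | ⟨x, hx, hev⟩
        · exact Or.inr ⟨c, List.mem_cons_self .., h⟩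
        · exact Or.inr ⟨x, List.mem_cons_of_mem _ hx, hev⟩

/-- The __Host- prefix strictly improves cookie integrity over the __Secure-
prefix in the presence of related domains: L_host ⊑_C L_pref always, and if d
has a related domain distinct from itself then ¬(L_pref ⊑_C L_host);
equivalently, L_pref ⊑_I L_host always, strictly in the latter case. -/
theorem host_prefix_strictly_better {D : Type*}
    (R : Finset D) (d : D) (hd : d ∈ R)
    (e : D) (es : List D) (henum : ∀ x : D, x ∈ e :: es ↔ x ∈ R) :
    Cleq (SL.https d) (bigJoin SL.https e es) ∧
    ((∃ d' ∈ R, d' ≠ d) → ¬ Cleq (bigJoin SL.https e es) (SL.https d)) ∧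
    Ileq (bigJoin SL.https e es) (SL.https d) ∧
    ((∃ d' ∈ R, d' ≠ d) → ¬ Ileq (SL.https d) (bigJoin SL.https e es)) := by
  have hmem : d ∈ e :: es := (henum d).mpr hd
  have h1 : Cleq (SL.https d) (bigJoin SL.https e es) := by
    apply mem_le_joinList
    rcases List.mem_cons.mp hmem with h | h
    · exact Or.inl (by rw [h])
    · exact Or.inr (List.mem_map_of_mem h)
  have h2 : (∃ d' ∈ R, d' ≠ d) → ¬ Cleq (bigJoin SL.https e es) (SL.https d) := by
    rintro ⟨d', hd'R, hne⟩ hC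
    have hd'mem : d' ∈ e :: es := (henum d').mpr hd'R
    have hev : ev (fun x => x = d') (bigJoin SL.https e es) := by
      unfold bigJoin
      rcases List.mem_cons.mp hd'mem with h | h
      · subst h
        cases es.map SL.https with
        | nil => rfl
        | cons c cs => exact Or.inl rfl
      · have : ev (fun x => x = d') (SL.https d') := rfl
        -- show joinList evaluates true if some member true; use monotonicity instead
        exact ev_mono _ (mem_le_joinList (SL.https d') (SL.https e) (es.map SL.https)
          (Or.inr (List.mem_map_of_mem h))) this
    have : ev (fun x => x = d') (SL.https d) := ev_mono _ hC hev
    exact hne (show d = d' from this).symm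
  exact ⟨h1, h2, h1, fun h => h2 h⟩
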